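/- Let F : H → (-∞, +∞] be convex, proper, lower semicontinuous with argmin F ≠ ∅ and let λ > 0. If the Moreau envelope F_λ satisfies the Polyak-Łojasiewicz condition with parameter μ > 0, then F satisfies the quadratic growth condition (μ/2)·dist(x, argmin F)² ≤ F(x) - F* for all x ∈ H. -/

import Mathlib

set_option maxHeartbeats 1000000
set_option linter.unusedSectionVars false
set_option linter.deprecated false
set_option linter.unusedVariables false
open Metric Filter


section aux
variable {H : Type*} [NormedAddCommGroup H] [InnerProductSpace ℝ H]
variable {F : H → EReal} {Fstar lam : ℝ} {Fl : H → ℝ}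

-- Fl x ≤ r + ‖y-x‖²/(2λ) when F y = r
lemma moreau_term_le
    (hFl : ∀ x, (Fl x : EReal) = ⨅ y, F y + ((‖y - x‖ ^ 2 / (2 * lam) : ℝ) : EReal))
    {x y : H} {r : ℝ} (hy : F y = (r : EReal)) :
    Fl x ≤ r + ‖y - x‖ ^ 2 / (2 * lam) := by
  have h1 : (Fl x : EReal) ≤ F y + ((‖y - x‖ ^ 2 / (2 * lam) : ℝ) : EReal) := by
    rw [hFl x]; exact iInf_le _ y
  rw [hy, ← EReal.coe_add] at h1
  exact EReal.coe_le_coe_iff.mp h1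

lemma moreau_Fstar_le (hFstar : ∀ x, (Fstar : EReal) ≤ F x) (hlam : 0 < lam)
    (hFl : ∀ x, (Fl x : EReal) = ⨅ y, F y + ((‖y - x‖ ^ 2 / (2 * lam) : ℝ) : EReal))
    (x : H) : Fstar ≤ Fl x := by
  have h1 : (Fstar : EReal) ≤ (Fl x : EReal) := by
    rw [hFl x]
    refine le_iInf fun y => ?_
    have h2 : (0 : EReal) ≤ ((‖y - x‖ ^ 2 / (2 * lam) : ℝ) : EReal) := by
      rw [← EReal.coe_zero, EReal.coe_le_coe_iff]
      positivity
    calc (Fstar : EReal) = (Fstar : EReal) + 0 := by rw [add_zero]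
      _ ≤ F y + ((‖y - x‖ ^ 2 / (2 * lam) : ℝ) : EReal) := add_le_add (hFstar y) h2
  exact EReal.coe_le_coe_iff.mp h1

lemma moreau_le_F
    (hFl : ∀ x, (Fl x : EReal) = ⨅ y, F y + ((‖y - x‖ ^ 2 / (2 * lam) : ℝ) : EReal))
    (x : H) : (Fl x : EReal) ≤ F x := by
  have h1 : (Fl x : EReal) ≤ F x + ((‖x - x‖ ^ 2 / (2 * lam) : ℝ) : EReal) := by
    rw [hFl x]; exact iInf_le _ x
  simpa using h1
end aux



section aux
variable {H : Type*} [NormedAddCommGroup H] [InnerProductSpace ℝ H]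
variable {F : H → EReal} {Fstar lam : ℝ} {Fl : H → ℝ}

lemma moreau_min_mem
    (hlsc : LowerSemicontinuous F) (hFstar : ∀ x, (Fstar : EReal) ≤ F x) (hlam : 0 < lam)
    (hFl : ∀ x, (Fl x : EReal) = ⨅ y, F y + ((‖y - x‖ ^ 2 / (2 * lam) : ℝ) : EReal))
    {z : H} (hz : Fl z = Fstar) : F z = (Fstar : EReal) := by
  by_contra hne
  have hgt : (Fstar : EReal) < F z := lt_of_le_of_ne (hFstar z) (Ne.symm hne)
  obtain ⟨q, hq1, hq2⟩ := EReal.exists_between_coe_real hgt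
  have hq1' : Fstar < q := EReal.coe_lt_coe_iff.mp hq1
  -- lsc: eventually F y > q near z
  have hev : ∀ᶠ y in nhds z, (q : EReal) < F y := hlsc z _ hq2
  obtain ⟨ρ, hρ, hball⟩ := Metric.eventually_nhds_iff_ball.mp hev
  -- choose ε > 0 with Fstar + ε ≤ q and 2λε < ρ²
  set ε : ℝ := min (q - Fstar) (ρ ^ 2 / (4 * lam)) with hεdef
  have hε : 0 < ε := lt_min (by linarith) (by positivity)
  -- iInf < Fstar + ε gives a witness
  have h1 : (⨅ y, F y + ((‖y - z‖ ^ 2 / (2 * lam) : ℝ) : EReal)) < ((Fstar + ε : ℝ) : EReal) := by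
    rw [← hFl z, hz, EReal.coe_lt_coe_iff]; linarith
  obtain ⟨y, hy⟩ := iInf_lt_iff.mp h1
  -- F y is real
  have hytop : F y ≠ ⊤ := by
    intro htop
    rw [htop] at hy
    simp [EReal.top_add_of_ne_bot] at hy
  have hybot : F y ≠ ⊥ := ne_bot_of_le_ne_bot (by simp) (hFstar y)
  obtain ⟨r, hr⟩ : ∃ r : ℝ, F y = (r : EReal) := ⟨(F y).toReal, (EReal.coe_toReal hytop hybot).symm⟩
  rw [hr, ← EReal.coe_add, EReal.coe_lt_coe_iff] at hy
  have hrF : Fstar ≤ r := EReal.coe_le_coe_iff.mp (hr ▸ hFstar y)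
  have hn : ‖y - z‖ ^ 2 / (2 * lam) < ε := by linarith
  have hd : ‖y - z‖ < ρ := by
    have h2 : ‖y - z‖ ^ 2 < 2 * lam * ε := by
      rw [div_lt_iff₀ (by positivity)] at hn; linarith [hn]
    have h3 : 2 * lam * ε ≤ ρ ^ 2 / 2 := by
      have := min_le_right (q - Fstar) (ρ ^ 2 / (4 * lam))
      calc 2 * lam * ε ≤ 2 * lam * (ρ ^ 2 / (4 * lam)) := by
            apply mul_le_mul_of_nonneg_left (hεdef ▸ this) (by positivity)
        _ = ρ ^ 2 / 2 := by field_simp; ring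
    nlinarith [norm_nonneg (y - z), hρ]
  have hmem : (q : EReal) < F y := hball y (by simpa [Metric.mem_ball, dist_eq_norm] using hd)
  rw [hr, EReal.coe_lt_coe_iff] at hmem
  have : r < q := by
    have := min_le_left (q - Fstar) (ρ ^ 2 / (4 * lam))
    have h4 : ε ≤ q - Fstar := hεdef ▸ this
    nlinarith [sq_nonneg ‖y - z‖, div_nonneg (sq_nonneg ‖y - z‖) (le_of_lt (by positivity : (0:ℝ) < 2*lam))]
  linarith
end aux



section aux
variable {H : Type*} [NormedAddCommGroup H] [InnerProductSpace ℝ H]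
variable {F : H → EReal} {Fstar lam : ℝ} {Fl : H → ℝ}

lemma moreau_semiconcave
    (hFstar : ∀ x, (Fstar : EReal) ≤ F x) (hlam : 0 < lam)
    (hFl : ∀ x, (Fl x : EReal) = ⨅ y, F y + ((‖y - x‖ ^ 2 / (2 * lam) : ℝ) : EReal))
    (x v : H) (t : ℝ) (ht0 : 0 ≤ t) (ht1 : t ≤ 1) :
    (1 - t) * Fl x + t * Fl (x + v) - t * (1 - t) * (‖v‖ ^ 2 / (2 * lam))
      ≤ Fl (x + t • v) := by
  have key : ∀ y : H,
      (((1 - t) * Fl x + t * Fl (x + v) - t * (1 - t) * (‖v‖ ^ 2 / (2 * lam)) : ℝ) : EReal)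
        ≤ F y + ((‖y - (x + t • v)‖ ^ 2 / (2 * lam) : ℝ) : EReal) := by
    intro y
    rcases eq_or_ne (F y) ⊤ with htop | htop
    · rw [htop, EReal.top_add_of_ne_bot (by simp)]; exact le_top
    · have hybot : F y ≠ ⊥ := ne_bot_of_le_ne_bot (by simp) (hFstar y)
      obtain ⟨r, hr⟩ : ∃ r : ℝ, F y = (r : EReal) := ⟨_, (EReal.coe_toReal htop hybot).symm⟩
      rw [hr, ← EReal.coe_add, EReal.coe_le_coe_iff]
      have h1 := moreau_term_le hFl (x := x) hr
      have h2 := moreau_term_le hFl (x := x + v) hr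
      have e1 : y - (x + t • v) = (y - x) - t • v := by abel
      have e2 : y - (x + v) = (y - x) - v := by abel
      rw [e1]
      have i1 : ‖(y - x) - t • v‖ ^ 2
          = ‖y - x‖ ^ 2 - 2 * (t * (inner ℝ (y - x) v : ℝ)) + t ^ 2 * ‖v‖ ^ 2 := by
        rw [norm_sub_sq_real, real_inner_smul_right, norm_smul]
        simp [mul_pow, abs_sq]
      have i2 : ‖y - (x + v)‖ ^ 2
          = ‖y - x‖ ^ 2 - 2 * (inner ℝ (y - x) v : ℝ) + ‖v‖ ^ 2 := by
        rw [e2, norm_sub_sq_real]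
      rw [i2] at h2
      rw [i1]
      have hl2 : (0:ℝ) < 2 * lam := by positivity
      have H1 : (1 - t) * Fl x ≤ (1 - t) * (r + ‖y - x‖ ^ 2 / (2 * lam)) :=
        mul_le_mul_of_nonneg_left h1 (by linarith)
      have H2 : t * Fl (x + v)
          ≤ t * (r + (‖y - x‖ ^ 2 - 2 * (inner ℝ (y - x) v : ℝ) + ‖v‖ ^ 2) / (2 * lam)) :=
        mul_le_mul_of_nonneg_left h2 ht0
      have expand : (1 - t) * (r + ‖y - x‖ ^ 2 / (2 * lam))
          + t * (r + (‖y - x‖ ^ 2 - 2 * (inner ℝ (y - x) v : ℝ) + ‖v‖ ^ 2) / (2 * lam))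
          = r + (‖y - x‖ ^ 2 - 2 * (t * (inner ℝ (y - x) v : ℝ)) + t ^ 2 * ‖v‖ ^ 2) / (2 * lam)
            + t * (1 - t) * (‖v‖ ^ 2 / (2 * lam)) := by
        field_simp
        ring
      linarith
  have h3 : (((1 - t) * Fl x + t * Fl (x + v) - t * (1 - t) * (‖v‖ ^ 2 / (2 * lam)) : ℝ) : EReal)
      ≤ (Fl (x + t • v) : EReal) := by
    rw [hFl]; exact le_iInf key
  exact EReal.coe_le_coe_iff.mp h3
end aux



section aux
variable {H : Type*} [NormedAddCommGroup H] [InnerProductSpace ℝ H] [CompleteSpace H]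
variable {F : H → EReal} {Fstar lam : ℝ} {Fl : H → ℝ} {Fl' : H → H}

lemma moreau_descent
    (hlam : 0 < lam)
    (hsemi : ∀ (x v : H) (t : ℝ), 0 ≤ t → t ≤ 1 →
      (1 - t) * Fl x + t * Fl (x + v) - t * (1 - t) * (‖v‖ ^ 2 / (2 * lam))
        ≤ Fl (x + t • v))
    (hgrad : ∀ x, HasGradientAt Fl (Fl' x) x)
    (x v : H) :
    Fl (x + v) ≤ Fl x + (inner ℝ (Fl' x) v : ℝ) + ‖v‖ ^ 2 / (2 * lam) := by
  set φ : ℝ → ℝ := fun t => Fl (x + t • v) with hφdef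
  have hψ : HasDerivAt (fun t : ℝ => x + t • v) v 0 := by
    simpa using ((hasDerivAt_id (0 : ℝ)).smul_const v).const_add x
  have hφ : HasDerivAt φ (inner ℝ (Fl' x) v : ℝ) 0 := by
    have h := (hgrad x).hasFDerivAt
    have h0 : x + (0 : ℝ) • v = x := by simp
    have := HasFDerivAt.comp_hasDerivAt (0 : ℝ) (h0 ▸ h) hψ
    simp [Function.comp, InnerProductSpace.toDual_apply_apply] at this
    exact this
  have hslope : Tendsto (slope φ 0) (nhdsWithin 0 (Set.Ioi 0)) (nhds (inner ℝ (Fl' x) v : ℝ)) :=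
    (hasDerivAt_iff_tendsto_slope.mp hφ).mono_left
      (nhdsWithin_mono 0 (fun t ht => ne_of_gt ht))
  have hlin : Tendsto (fun t : ℝ => (1 - t) * (‖v‖ ^ 2 / (2 * lam)))
      (nhdsWithin 0 (Set.Ioi 0)) (nhds (‖v‖ ^ 2 / (2 * lam))) := by
    have : Tendsto (fun t : ℝ => (1 - t) * (‖v‖ ^ 2 / (2 * lam))) (nhds 0)
        (nhds ((1 - 0) * (‖v‖ ^ 2 / (2 * lam)))) :=
      ((continuous_const.sub continuous_id).mul continuous_const).tendsto 0
    simpa using this.mono_left nhdsWithin_le_nhds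
  have hG : Tendsto (fun t : ℝ => Fl x + slope φ 0 t + (1 - t) * (‖v‖ ^ 2 / (2 * lam)))
      (nhdsWithin 0 (Set.Ioi 0))
      (nhds (Fl x + (inner ℝ (Fl' x) v : ℝ) + ‖v‖ ^ 2 / (2 * lam))) :=
    (tendsto_const_nhds.add hslope).add hlin
  refine ge_of_tendsto hG ?_
  filter_upwards [Ioo_mem_nhdsGT_of_mem (by constructor <;> norm_num : (0:ℝ) ∈ Set.Ico 0 1)]
    with t ht
  obtain ⟨ht0, ht1⟩ := ht
  have key := hsemi x v t (le_of_lt ht0) (le_of_lt ht1)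
  have hφ0 : φ 0 = Fl x := by simp [hφdef]
  have hst : slope φ 0 t = (φ t - Fl x) / t := by
    rw [slope_def_field, hφ0]; ring_nf
  rw [hst]
  have h2 : (Fl (x + v) - Fl x - (1 - t) * (‖v‖ ^ 2 / (2 * lam))) * t ≤ φ t - Fl x := by
    nlinarith [key]
  have h3 := (le_div_iff₀ ht0).mpr h2
  linarith
end aux



section aux
variable {H : Type*} [NormedAddCommGroup H] [InnerProductSpace ℝ H] [CompleteSpace H]

lemma moreau_qg_main (Fl : H → ℝ) (Fl' : H → H) (Fstar lam μ : ℝ) (Xs : Set H)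
    (hlam : 0 < lam) (hμ : 0 < μ)
    (hlb : ∀ x, Fstar ≤ Fl x)
    (hdes : ∀ x v, Fl (x + v) ≤ Fl x + (inner ℝ (Fl' x) v : ℝ) + ‖v‖ ^ 2 / (2 * lam))
    (hpl : ∀ x, Fl x - Fstar ≤ 1 / (2 * μ) * ‖Fl' x‖ ^ 2)
    (hcont : Continuous Fl)
    (hlevel : ∀ z, Fl z = Fstar → z ∈ Xs)
    (x₀ : H) (h : ℝ) (hh0 : 0 < h) (hh2l : h < 2 * lam) (hh2m : 2 * μ * h ≤ 1) :
    (1 - h / (2 * lam)) * Real.sqrt (2 * μ) * infDist x₀ Xs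
      ≤ 2 * Real.sqrt (Fl x₀ - Fstar) := by
  set s2m : ℝ := Real.sqrt (2 * μ) with hs2mdef
  have hs2m : 0 < s2m := Real.sqrt_pos.mpr (by positivity)
  set c : ℝ := 1 - h / (2 * lam) with hcdef
  have hc0 : 0 < c := by
    have : h / (2 * lam) < 1 := (div_lt_one (by positivity)).mpr hh2l
    simp only [hcdef]; linarith
  have hc1 : c ≤ 1 := by
    have : 0 ≤ h / (2 * lam) := by positivity
    simp only [hcdef]; linarith
  set K : ℝ := 2 / (c * s2m) with hKdef
  have hK0 : 0 ≤ K := by positivity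
  set f : H → H := fun p => p - h • Fl' p with hfdef
  set seq : ℕ → H := fun n => f^[n] x₀ with hseqdef
  have hseq0 : seq 0 = x₀ := rfl
  have hseqS : ∀ n, seq (n + 1) = seq n - h • Fl' (seq n) := by
    intro n
    simp only [hseqdef, Function.iterate_succ_apply', hfdef]
  set Δ : ℕ → ℝ := fun n => Fl (seq n) - Fstar with hΔdef
  set T : ℕ → ℝ := fun n => Real.sqrt (Δ n) with hTdef
  have hΔ0 : ∀ n, 0 ≤ Δ n := fun n => sub_nonneg.2 (hlb _)
  have hT0 : ∀ n, 0 ≤ T n := fun n => Real.sqrt_nonneg _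
  have hT2 : ∀ n, T n ^ 2 = Δ n := fun n => Real.sq_sqrt (hΔ0 n)
  -- descent step
  have hdesc : ∀ n, Δ (n + 1) ≤ Δ n - h * c * ‖Fl' (seq n)‖ ^ 2 := by
    intro n
    have h1 := hdes (seq n) (-(h • Fl' (seq n)))
    have e1 : seq n + -(h • Fl' (seq n)) = seq (n + 1) := by
      rw [hseqS n]; abel
    rw [e1] at h1
    have e2 : (inner ℝ (Fl' (seq n)) (-(h • Fl' (seq n))) : ℝ) = -(h * ‖Fl' (seq n)‖ ^ 2) := by
      rw [inner_neg_right, real_inner_smul_right, real_inner_self_eq_norm_sq]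
    have e3 : ‖-(h • Fl' (seq n))‖ ^ 2 = h ^ 2 * ‖Fl' (seq n)‖ ^ 2 := by
      rw [norm_neg, norm_smul, Real.norm_eq_abs, mul_pow, sq_abs]
    rw [e2, e3] at h1
    have e4 : Fl (seq n) + -(h * ‖Fl' (seq n)‖ ^ 2) + h ^ 2 * ‖Fl' (seq n)‖ ^ 2 / (2 * lam)
        = Fl (seq n) - h * c * ‖Fl' (seq n)‖ ^ 2 := by
      simp only [hcdef]; field_simp; ring
    rw [e4] at h1
    show Fl (seq (n + 1)) - Fstar ≤ Fl (seq n) - Fstar - h * c * ‖Fl' (seq n)‖ ^ 2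
    linarith
  have hΔmono : ∀ n, Δ (n + 1) ≤ Δ n := by
    intro n
    have hnn : 0 ≤ h * c * ‖Fl' (seq n)‖ ^ 2 := by positivity
    linarith [hdesc n]
  have hTmono : ∀ n, T (n + 1) ≤ T n := fun n => Real.sqrt_le_sqrt (hΔmono n)
  have hTanti : ∀ N n, N ≤ n → T n ≤ T N := by
    intro N n hNn
    induction n, hNn using Nat.le_induction with
    | base => exact le_refl _
    | succ n hNn ih => exact le_trans (hTmono n) ih
  -- PL in useful form
  have hPL' : ∀ n, 2 * μ * Δ n ≤ ‖Fl' (seq n)‖ ^ 2 := by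
    intro n
    have h1 := hpl (seq n)
    have h2 : Fl (seq n) - Fstar = Δ n := rfl
    rw [h2, div_mul_eq_mul_div, le_div_iff₀ (by positivity)] at h1
    nlinarith [h1]
  -- key per-step length bound
  have hstep : ∀ n, h * ‖Fl' (seq n)‖ ≤ K * (T n - T (n + 1)) := by
    intro n
    set G : ℝ := ‖Fl' (seq n)‖ with hGdef
    have hG0 : 0 ≤ G := norm_nonneg _
    have hTd : 0 ≤ T n - T (n + 1) := sub_nonneg.2 (hTmono n)
    rcases eq_or_lt_of_le hG0 with hG | hG
    · rw [← hG]
      nlinarith [hK0, hTd]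
    · have h3 : s2m * T n ≤ G := by
        have e5 : s2m * T n = Real.sqrt (2 * μ * Δ n) := by
          rw [hs2mdef, hTdef, ← Real.sqrt_mul (by positivity)]
        rw [e5]
        calc Real.sqrt (2 * μ * Δ n) ≤ Real.sqrt (G ^ 2) := Real.sqrt_le_sqrt (hPL' n)
          _ = G := Real.sqrt_sq hG0
      have h4 : (T n - T (n + 1)) * (T n + T (n + 1)) = Δ n - Δ (n + 1) := by
        nlinarith [hT2 n, hT2 (n + 1)]
      have hAB : h * c * G ^ 2 ≤ Δ n - Δ (n + 1) := by
        have := hdesc n; linarith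
      have e1 : s2m * (T n + T (n + 1)) ≤ 2 * G := by
        have h5 : s2m * T (n + 1) ≤ s2m * T n :=
          mul_le_mul_of_nonneg_left (hTmono n) (le_of_lt hs2m)
        nlinarith [h3, h5]
      have e2 : s2m * (Δ n - Δ (n + 1)) ≤ (T n - T (n + 1)) * (2 * G) := by
        calc s2m * (Δ n - Δ (n + 1)) = (T n - T (n + 1)) * (s2m * (T n + T (n + 1))) := by
              rw [← h4]; ring
          _ ≤ (T n - T (n + 1)) * (2 * G) := mul_le_mul_of_nonneg_left e1 hTd
      have e3 : s2m * (h * c * G ^ 2) ≤ (T n - T (n + 1)) * (2 * G) :=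
        le_trans (mul_le_mul_of_nonneg_left hAB (le_of_lt hs2m)) e2
      have e6 : h * G * (c * s2m) ≤ 2 * (T n - T (n + 1)) := by
        nlinarith [e3, hG]
      have e7 : h * G ≤ 2 * (T n - T (n + 1)) / (c * s2m) :=
        (le_div_iff₀ (by positivity)).mpr e6
      calc h * G ≤ 2 * (T n - T (n + 1)) / (c * s2m) := e7
        _ = K * (T n - T (n + 1)) := by rw [hKdef]; ring
  -- step length
  have hlen : ∀ n, dist (seq (n + 1)) (seq n) = h * ‖Fl' (seq n)‖ := by
    intro n
    rw [dist_eq_norm, hseqS n]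
    have : seq n - h • Fl' (seq n) - seq n = -(h • Fl' (seq n)) := by abel
    rw [this, norm_neg, norm_smul, Real.norm_eq_abs, abs_of_pos hh0]
  -- telescoping from any start index
  have htel : ∀ N n, N ≤ n → dist (seq n) (seq N) ≤ K * (T N - T n) := by
    intro N n hNn
    induction n, hNn using Nat.le_induction with
    | base => simp
    | succ n hNn ih =>
        calc dist (seq (n + 1)) (seq N)
            ≤ dist (seq (n + 1)) (seq n) + dist (seq n) (seq N) := dist_triangle _ _ _
          _ ≤ K * (T n - T (n + 1)) + K * (T N - T n) := by
              rw [hlen n]; exact add_le_add (hstep n) ih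
          _ = K * (T N - T (n + 1)) := by ring
  -- geometric decay of Δ
  set q : ℝ := 1 - 2 * μ * c * h with hqdef
  have hq0 : 0 ≤ q := by
    have h1 : 2 * μ * c * h ≤ 2 * μ * h := by
      have := mul_nonneg (mul_nonneg hμ.le (sub_nonneg.2 hc1)) hh0.le
      nlinarith [this]
    simp only [hqdef]; linarith
  have hq1 : q < 1 := by
    have : 0 < 2 * μ * c * h := by positivity
    simp only [hqdef]; linarith
  have hΔq : ∀ n, Δ (n + 1) ≤ q * Δ n := by
    intro n
    have h1 := hdesc n
    have h2 := hPL' n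
    have h3 : h * c * (2 * μ * Δ n) ≤ h * c * ‖Fl' (seq n)‖ ^ 2 :=
      mul_le_mul_of_nonneg_left h2 (by positivity)
    simp only [hqdef]; nlinarith
  have hΔgeo : ∀ n, Δ n ≤ q ^ n * Δ 0 := by
    intro n
    induction n with
    | zero => simp
    | succ n ih =>
        calc Δ (n + 1) ≤ q * Δ n := hΔq n
          _ ≤ q * (q ^ n * Δ 0) := mul_le_mul_of_nonneg_left ih hq0
          _ = q ^ (n + 1) * Δ 0 := by ring
  have hΔto0 : Tendsto Δ atTop (nhds 0) := by
    refine squeeze_zero hΔ0 hΔgeo ?_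
    have := (tendsto_pow_atTop_nhds_zero_of_lt_one hq0 hq1).mul_const (Δ 0)
    simpa using this
  have hTto0 : Tendsto T atTop (nhds 0) := by
    have := hΔto0.sqrt
    simpa [hTdef] using this
  -- Cauchy sequence
  have hcauchy : CauchySeq seq := by
    apply cauchySeq_of_le_tendsto_0 (fun N => 2 * (K * T N))
    · intro n m N hn hm
      calc dist (seq n) (seq m)
          ≤ dist (seq n) (seq N) + dist (seq m) (seq N) := dist_triangle_right _ _ _
        _ ≤ K * (T N - T n) + K * (T N - T m) := add_le_add (htel N n hn) (htel N m hm)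
        _ ≤ 2 * (K * T N) := by nlinarith [hT0 n, hT0 m, hK0]
    · have := (hTto0.const_mul K).const_mul (2 : ℝ)
      simpa using this
  obtain ⟨z, hz⟩ := cauchySeq_tendsto_of_complete hcauchy
  -- the limit is a minimizer
  have hFlz : Fl z = Fstar := by
    have h1 : Tendsto (fun n => Fl (seq n)) atTop (nhds (Fl z)) :=
      ((hcont.tendsto z).comp hz)
    have h2 : Tendsto (fun n => Fl (seq n)) atTop (nhds Fstar) := by
      have h3 : Tendsto (fun n => Δ n + Fstar) atTop (nhds (0 + Fstar)) :=
        hΔto0.add_const Fstar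
      simpa [hΔdef] using h3
    exact tendsto_nhds_unique h1 h2
  have hzXs : z ∈ Xs := hlevel z hFlz
  -- distance bound
  have hdz : dist x₀ z ≤ K * T 0 := by
    have h1 : Tendsto (fun n => dist x₀ (seq n)) atTop (nhds (dist x₀ z)) :=
      tendsto_const_nhds.dist hz
    refine le_of_tendsto h1 (Filter.Eventually.of_forall fun n => ?_)
    calc dist x₀ (seq n) = dist (seq n) (seq 0) := by rw [hseq0, dist_comm]
      _ ≤ K * (T 0 - T n) := htel 0 n (Nat.zero_le n)
      _ ≤ K * T 0 := by nlinarith [hT0 n, hK0]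
  have hinf : infDist x₀ Xs ≤ K * T 0 := le_trans (infDist_le_dist_of_mem hzXs) hdz
  -- rearrange
  have hT00 : T 0 = Real.sqrt (Fl x₀ - Fstar) := by simp [hTdef, hΔdef, hseq0]
  have h9 : infDist x₀ Xs * (c * s2m) ≤ 2 * T 0 := by
    rw [hKdef] at hinf
    have h10 : infDist x₀ Xs ≤ 2 * T 0 / (c * s2m) := by
      calc infDist x₀ Xs ≤ 2 / (c * s2m) * T 0 := hinf
        _ = 2 * T 0 / (c * s2m) := by ring
    exact (le_div_iff₀ (by positivity)).mp h10
  calc c * s2m * infDist x₀ Xs = infDist x₀ Xs * (c * s2m) := by ring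
    _ ≤ 2 * T 0 := h9
    _ = 2 * Real.sqrt (Fl x₀ - Fstar) := by rw [hT00]
end aux



section aux2
variable {H : Type*} [NormedAddCommGroup H] [InnerProductSpace ℝ H] [CompleteSpace H]

lemma moreau_qg_limit (lam μ d Δ : ℝ)
    (hlam : 0 < lam) (hμ : 0 < μ) (hd0 : 0 ≤ d) (hΔ0 : 0 ≤ Δ)
    (main : ∀ h : ℝ, 0 < h → h < 2 * lam → 2 * μ * h ≤ 1 →
      (1 - h / (2 * lam)) * Real.sqrt (2 * μ) * d ≤ 2 * Real.sqrt Δ) :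
    μ / 2 * d ^ 2 ≤ Δ := by
  set s2m : ℝ := Real.sqrt (2 * μ) with hs2mdef
  have hs2m : 0 < s2m := Real.sqrt_pos.mpr (by positivity)
  have hs2m2 : s2m ^ 2 = 2 * μ := Real.sq_sqrt (by positivity)
  have hlim : s2m * d ≤ 2 * Real.sqrt Δ := by
    set h₀ : ℝ := min (2 * lam) (1 / (2 * μ)) with hh₀def
    have hh₀ : 0 < h₀ := lt_min (by positivity) (by positivity)
    have htends : Tendsto (fun h : ℝ => (1 - h / (2 * lam)) * s2m * d)
        (nhdsWithin 0 (Set.Ioi 0)) (nhds (s2m * d)) := by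
      have hcont : Tendsto (fun h : ℝ => (1 - h / (2 * lam)) * s2m * d) (nhds 0)
          (nhds ((1 - 0 / (2 * lam)) * s2m * d)) := by
        apply Continuous.tendsto
        continuity
      simpa using hcont.mono_left nhdsWithin_le_nhds
    refine le_of_tendsto htends ?_
    filter_upwards [Ioo_mem_nhdsGT_of_mem (Set.mem_Ico.mpr ⟨le_refl 0, hh₀⟩)] with h hh
    obtain ⟨hh1, hh2⟩ := hh
    refine main h hh1 (lt_of_lt_of_le hh2 (min_le_left _ _)) ?_
    have h3 : h < 1 / (2 * μ) := lt_of_lt_of_le hh2 (min_le_right _ _)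
    rw [lt_div_iff₀ (by positivity)] at h3
    nlinarith [h3]
  nlinarith [mul_self_le_mul_self (by positivity : (0:ℝ) ≤ s2m * d) hlim,
    Real.sq_sqrt hΔ0, Real.sqrt_nonneg Δ, hs2m2]
end aux2

/-- If the Moreau envelope F_λ of a convex, proper, lsc function F satisfies the PL
condition with parameter μ, then F satisfies the quadratic growth condition with
parameter μ. -/
theorem moreau_pl_implies_qg {H : Type*} [NormedAddCommGroup H] [InnerProductSpace ℝ H]
    [CompleteSpace H]
    (F : H → EReal) (hconv : ∀ x y : H, ∀ a b : ℝ, 0 ≤ a → 0 ≤ b → a + b = 1 →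
      F (a • x + b • y) ≤ (a : EReal) * F x + (b : EReal) * F y)
    (hlsc : LowerSemicontinuous F)
    (hproper : (∀ x, F x ≠ ⊥) ∧ ∃ x, F x ≠ ⊤)
    (Fstar : ℝ) (hFstar : ∀ x, (Fstar : EReal) ≤ F x)
    (Xs : Set H) (hXs : Xs = {x | F x = (Fstar : EReal)}) (hne : Xs.Nonempty)
    (lam : ℝ) (hlam : 0 < lam)
    (Fl : H → ℝ)
    (hFl : ∀ x, (Fl x : EReal) = ⨅ y, F y + ((‖y - x‖ ^ 2 / (2 * lam) : ℝ) : EReal))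
    (Fl' : H → H) (hgrad : ∀ x, HasGradientAt Fl (Fl' x) x)
    (μ : ℝ) (hμ : 0 < μ)
    (hpl : ∀ x, Fl x - Fstar ≤ 1 / (2 * μ) * ‖Fl' x‖ ^ 2) :
    ∀ x, ((μ / 2 * (Metric.infDist x Xs) ^ 2 : ℝ) : EReal) + (Fstar : EReal) ≤ F x := by
  intro x
  have hcont : Continuous Fl :=
    continuous_iff_continuousAt.mpr fun y => ((hgrad y).hasFDerivAt).continuousAt
  have hsemi := moreau_semiconcave (F := F) hFstar hlam hFl
  have hdes := moreau_descent hlam hsemi hgrad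
  have hlb : ∀ y, Fstar ≤ Fl y := fun y => moreau_Fstar_le hFstar hlam hFl y
  have hlevel : ∀ z, Fl z = Fstar → z ∈ Xs := fun z hz => by
    rw [hXs]; exact moreau_min_mem hlsc hFstar hlam hFl hz
  have hdes' : ∀ p v, Fl (p + v) ≤ Fl p + (inner ℝ (Fl' p) v : ℝ) + ‖v‖ ^ 2 / (2 * lam) := by
    intro p v
    have := hdes p v
    linarith
  have main := fun (h : ℝ) (h1 : 0 < h) (h2 : h < 2 * lam) (h3 : 2 * μ * h ≤ 1) =>
    moreau_qg_main Fl Fl' Fstar lam μ Xs hlam hμ hlb hdes' hpl hcont hlevel x h h1 h2 h3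
  have hreal : μ / 2 * (infDist x Xs) ^ 2 ≤ Fl x - Fstar :=
    moreau_qg_limit lam μ (infDist x Xs) (Fl x - Fstar) hlam hμ infDist_nonneg
      (sub_nonneg.2 (hlb x)) main
  calc ((μ / 2 * (infDist x Xs) ^ 2 : ℝ) : EReal) + (Fstar : EReal)
      = ((μ / 2 * (infDist x Xs) ^ 2 + Fstar : ℝ) : EReal) := (EReal.coe_add _ _).symm
    _ ≤ (Fl x : EReal) := EReal.coe_le_coe_iff.mpr (by linarith)
    _ ≤ F x := moreau_le_F hFl x
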